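/- Let K be a field of characteristic zero and A, B, Ã ∈ K. Suppose W ∈ K[[u]] has zero constant term and satisfies the identity A·u + u·W' + 3A·u³·W' + 4B·u⁴·W' + 2u²·W'' + 2A·u⁴·W'' + 2B·u⁵·W'' = 6·W + 3u·W² + Ã·u in K[[u]]. Write W = Σ_{i≥1} h_i u^i. Then h₁ = (A − Ã)/5 and, for every k ≥ 3, h_k = (3/((k−2)(2k+3)))·Σ_{i=1}^{k−2} h_i h_{k−1−i} − ((2k−3)/(2k+3))·A·h_{k−2} − (2(k−3)/(2k+3))·B·h_{k−3}. -/

import Mathlib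

open PowerSeries

theorem coeff_X_mul'_aux {K : Type*} [CommRing K] (p : PowerSeries K) (d : ℕ) :
    coeff d (X * p) = if 1 ≤ d then coeff (d - 1) p else 0 := by
  rw [← pow_one (X : PowerSeries K), coeff_X_pow_mul']

/-- Elkies' recurrence (eq:elkies98): if `W = Σ_{i≥1} h_i u^i` satisfies the
`u`-form of Elkies' second-order differential equation
`A·u + u·W' + 3A·u³·W' + 4B·u⁴·W' + 2u²·W'' + 2A·u⁴·W'' + 2B·u⁵·W'' = 6W + 3u·W² + Ã·u`,
then `h₁ = (A − Ã)/5` and, for `k ≥ 3`,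
`h_k = (3/((k−2)(2k+3)))·Σ_{i=1}^{k−2} h_i h_{k−1−i} − ((2k−3)/(2k+3))·A·h_{k−2}
       − (2(k−3)/(2k+3))·B·h_{k−3}`. -/
theorem elkies_recurrence {K : Type*} [Field K] [CharZero K] (A B At : K)
    (W : PowerSeries K) (hW0 : constantCoeff W = 0)
    (hW : C A * X + X * d⁄dX K W + 3 * C A * X ^ 3 * d⁄dX K W
        + 4 * C B * X ^ 4 * d⁄dX K W + 2 * X ^ 2 * d⁄dX K (d⁄dX K W)
        + 2 * C A * X ^ 4 * d⁄dX K (d⁄dX K W) + 2 * C B * X ^ 5 * d⁄dX K (d⁄dX K W)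
      = 6 * W + 3 * X * W ^ 2 + C At * X) :
    coeff 1 W = (A - At) / 5 ∧
    ∀ k, 3 ≤ k →
      coeff k W =
        3 / (((k : K) - 2) * (2 * (k : K) + 3)) *
            (∑ i ∈ Finset.Icc 1 (k - 2), coeff i W * coeff (k - 1 - i) W)
          - ((2 * (k : K) - 3) / (2 * (k : K) + 3)) * A * coeff (k - 2) W
          - (2 * ((k : K) - 3) / (2 * (k : K) + 3)) * B * coeff (k - 3) W := by
  have hW0c : coeff 0 W = 0 := by rwa [coeff_zero_eq_constantCoeff]
  have hsq : ∀ n : ℕ, coeff n (W ^ 2)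
      = ∑ i ∈ Finset.range (n + 1), coeff i W * coeff (n - i) W := by
    intro n
    rw [pow_two, coeff_mul, Finset.Nat.sum_antidiagonal_eq_sum_range_succ_mk]
  have key := fun n : ℕ => congrArg (coeff n) hW
  simp only [map_add, ← map_ofNat (C (R := K)) 2, ← map_ofNat (C (R := K)) 3, ← map_ofNat (C (R := K)) 4,
    ← map_ofNat (C (R := K)) 6, ← map_mul, mul_assoc, coeff_C_mul, coeff_X_mul'_aux,
    coeff_X_pow_mul', coeff_derivative, coeff_X, hsq] at key
  have hsum : ∀ m : ℕ, ∑ i ∈ Finset.range (m + 3), coeff i W * coeff (m + 2 - i) W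
      = ∑ i ∈ Finset.Icc 1 (m + 1), coeff i W * coeff (m + 2 - i) W := by
    intro m
    rw [Finset.sum_range_succ, Finset.sum_range_succ']
    simp only [hW0c, zero_mul, mul_zero, add_zero, Nat.sub_self]
    rw [← Finset.Ico_add_one_right_eq_Icc, Finset.sum_Ico_eq_sum_range]
    simp only [Nat.succ_eq_add_one, show m + 1 + 1 - 1 = m + 1 from by omega]
    refine Finset.sum_congr rfl fun i _ => by rw [add_comm 1 i]
  constructor
  · have h1 := key 1
    norm_num [Finset.sum_range_succ, hW0] at h1
    linear_combination (-(1:K)/5) * h1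
  · intro k hk
    obtain ⟨m, rfl⟩ : ∃ m, k = m + 3 := ⟨k - 3, by omega⟩
    have hne1 : ((m : K) + 3 - 2) ≠ 0 := by
      have : ((m + 1 : ℕ) : K) ≠ 0 := Nat.cast_ne_zero.mpr (by omega)
      push_cast at this; intro h; exact this (by linear_combination h)
    have hne2 : (2 * ((m : K) + 3) + 3) ≠ 0 := by
      have : ((2 * m + 9 : ℕ) : K) ≠ 0 := Nat.cast_ne_zero.mpr (by omega)
      push_cast at this; intro h; exact this (by linear_combination h)
    simp only [show m + 3 - 2 = m + 1 from by omega, show m + 3 - 1 = m + 2 from by omega,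
      show m + 3 - 3 = m from by omega]
    push_cast
    rw [← hsum m]
    match m with
    | 0 =>
      have hn := key 3
      norm_num [Finset.sum_range_succ, hW0c] at hn ⊢
      field_simp
      linear_combination hn / 3
    | 1 =>
      have hn := key 4
      norm_num [Finset.sum_range_succ, hW0c] at hn ⊢
      field_simp
      linear_combination (11:K) * hn
    | (j + 2) =>
      have hn := key (j + 5)
      simp only [(show (1:ℕ) ≤ j+5 by omega), (show (2:ℕ) ≤ j+5 by omega),
        (show (3:ℕ) ≤ j+5 by omega), (show (4:ℕ) ≤ j+5 by omega), (show (5:ℕ) ≤ j+5 by omega),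
        (show ¬(j+5 = 1) by omega), (show j+5-1 = j+4 by omega), (show j+5-2 = j+3 by omega),
        (show j+5-3 = j+2 by omega), (show j+5-4 = j+1 by omega), (show j+5-5 = j by omega),
        if_true, if_false, eq_self_iff_true, ite_true, ite_false] at hn
    /- indices -/
      simp only [show j+4+1 = j+5 from by omega, show j+2+1 = j+3 from by omega,
        show j+1+1 = j+2 from by omega, show j+3+1+1 = j+5 from by omega,
        show j+1+1+1 = j+3 from by omega, show j+2+3 = j+5 from by omega,
        show j+2+2 = j+4 from by omega, show j+2+1 = j+3 from by omega,
        show j+4+1 = j+5 from by omega] at hn ⊢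
      have hd1 : ((j:K) + 2 + 3 - 2) ≠ 0 := by
        have : ((j + 3 : ℕ) : K) ≠ 0 := Nat.cast_ne_zero.mpr (by omega)
        push_cast at this; intro h; exact this (by linear_combination h)
      have hd2 : (2 * ((j:K) + 2 + 3) + 3) ≠ 0 := by
        have : ((2 * j + 13 : ℕ) : K) ≠ 0 := Nat.cast_ne_zero.mpr (by omega)
        push_cast at this; intro h; exact this (by linear_combination h)
      push_cast at hn ⊢
      field_simp [hd1, hd2]
      linear_combination hn
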